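/- Let η be the regression function of (X,Y) with Y ∈ [0,1], and f: ℝ^d → [0,1] with ∫ |η(x) − f(x)| μ(dx) < ε'. Then ∫ | E[f(X) g_{α,β}(X,x)] / E[g_{α,β}(X,x)] − E[η(X) g_{α,β}(X,x)] / E[g_{α,β}(X,x)] | μ(dx) ≤ R·ε', where R is the covering-lemma constant satisfying sup_u ∫ g_{α,β}(u,x)/E[g_{α,β}(X,x)] μ(dx) ≤ R. -/
import Mathlib


open MeasureTheory

/-- Proposition 1(2): If `∫ |η − φ| dμ < ε'` and `R` satisfies the
covering-lemma bound `sup_u ∫ g(u,x)/E[g(X,x)] μ(dx) ≤ R`, then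
`∫ |E[φ(X)g(X,x)]/E[g(X,x)] − E[η(X)g(X,x)]/E[g(X,x)]| μ(dx) ≤ R·ε'`.
Here `g(u,x) = g_{α,β}(u,x)` is the kernel weight, `μ` the law of `X`, and `η` the
regression function; `E[T_n*(x)] = E[η(X)g(X,x)]/E[g(X,x)]`. -/
theorem stmt_8 {d : ℕ}
    (μ : Measure (EuclideanSpace ℝ (Fin d))) [IsProbabilityMeasure μ]
    (g : EuclideanSpace ℝ (Fin d) → EuclideanSpace ℝ (Fin d) → ℝ)
    (hg0 : ∀ u x, 0 ≤ g u x)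
    (hgm : Measurable (Function.uncurry g))
    (hgint : ∀ x, Integrable (fun u => g u x) μ)
    (hgratio : ∀ u, Integrable (fun x => g u x / ∫ u', g u' x ∂μ) μ)
    (η φ : EuclideanSpace ℝ (Fin d) → ℝ) (hηm : Measurable η) (hφm : Measurable φ)
    (hη0 : ∀ x, 0 ≤ η x) (hη1 : ∀ x, η x ≤ 1) (hφ0 : ∀ x, 0 ≤ φ x) (hφ1 : ∀ x, φ x ≤ 1)
    (ε' : ℝ) (hεf : ∫ x, |η x - φ x| ∂μ < ε')
    (R : ℝ) (hR : ∀ u, ∫ x, g u x / (∫ u', g u' x ∂μ) ∂μ ≤ R) :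
    ∫ x, |(∫ u, φ u * g u x ∂μ) / (∫ u, g u x ∂μ) -
        (∫ u, η u * g u x ∂μ) / (∫ u, g u x ∂μ)| ∂μ ≤ R * ε' := by
  classical
  set D : EuclideanSpace ℝ (Fin d) → ℝ := fun x => ∫ u, g u x ∂μ with hDdef
  set F : EuclideanSpace ℝ (Fin d) → ℝ := fun u => |η u - φ u| with hFdef
  have hgsec : ∀ x, Measurable fun u => g u x := fun x =>
    hgm.comp (measurable_id.prodMk measurable_const)
  have hgsec' : ∀ u, Measurable fun x => g u x := fun u =>
    hgm.comp (measurable_const.prodMk measurable_id)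
  have hFm : Measurable F := (hηm.sub hφm).abs
  have hF0 : ∀ u, 0 ≤ F u := fun u => abs_nonneg _
  have hF1 : ∀ u, F u ≤ 1 := fun u =>
    abs_le.mpr ⟨by linarith [hη0 u, hφ1 u], by linarith [hη1 u, hφ0 u]⟩
  have hFint : Integrable F μ := by
    refine (integrable_const (1:ℝ)).mono' hFm.aestronglyMeasurable ?_
    filter_upwards with u
    simpa [abs_of_nonneg (hF0 u)] using hF1 u
  have hε0 : 0 ≤ ε' := le_of_lt (lt_of_le_of_lt (integral_nonneg fun u => hF0 u) hεf)
  have hR0 : 0 ≤ R :=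
    le_trans (integral_nonneg fun x =>
      div_nonneg (hg0 0 x) (integral_nonneg fun u => hg0 u x)) (hR 0)
  have hD0 : ∀ x, 0 ≤ D x := fun x => integral_nonneg fun u => hg0 u x
  have hDm : Measurable D :=
    (hgm.stronglyMeasurable.integral_prod_left).measurable
  -- integrability of ψ * g(·,x) for bounded ψ
  have hmul_int : ∀ (ψ : EuclideanSpace ℝ (Fin d) → ℝ), Measurable ψ →
      (∀ u, 0 ≤ ψ u) → (∀ u, ψ u ≤ 1) → ∀ x, Integrable (fun u => ψ u * g u x) μ := by
    intro ψ hψm hψ0 hψ1 x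
    refine (hgint x).mono' ((hψm.mul (hgsec x)).aestronglyMeasurable) ?_
    filter_upwards with u
    rw [Real.norm_eq_abs, abs_of_nonneg (mul_nonneg (hψ0 u) (hg0 u x))]
    calc ψ u * g u x ≤ 1 * g u x := mul_le_mul_of_nonneg_right (hψ1 u) (hg0 u x)
    _ = g u x := one_mul _
  -- pointwise bound in ℝ≥0∞
  have key : ∀ x, ENNReal.ofReal |(∫ u, φ u * g u x ∂μ) / D x - (∫ u, η u * g u x ∂μ) / D x|
      ≤ ∫⁻ u, ENNReal.ofReal (F u) * ENNReal.ofReal (g u x / D x) ∂μ := by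
    intro x
    rcases eq_or_lt_of_le (hD0 x) with hDx | hDx
    · rw [← hDx]
      simp
    · have hFg : Integrable (fun u => F u * g u x) μ := hmul_int F hFm hF0 hF1 x
      have h1 : |(∫ u, φ u * g u x ∂μ) / D x - (∫ u, η u * g u x ∂μ) / D x|
          ≤ (∫ u, F u * g u x ∂μ) / D x := by
        rw [div_sub_div_same, ← integral_sub (hmul_int φ hφm hφ0 hφ1 x)
          (hmul_int η hηm hη0 hη1 x), abs_div, abs_of_pos hDx]
        gcongr
        calc |∫ u, (φ u * g u x - η u * g u x) ∂μ|
            ≤ ∫ u, |φ u * g u x - η u * g u x| ∂μ := by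
              simpa [Real.norm_eq_abs] using
                norm_integral_le_integral_norm (fun u => φ u * g u x - η u * g u x)
        _ = ∫ u, F u * g u x ∂μ := by
          refine integral_congr_ae (Filter.Eventually.of_forall fun u => ?_)
          show |φ u * g u x - η u * g u x| = F u * g u x
          rw [← sub_mul, abs_mul, abs_of_nonneg (hg0 u x), abs_sub_comm]
      have h2 : (∫ u, F u * g u x ∂μ) / D x = ∫ u, F u * g u x / D x ∂μ :=
        (integral_div (D x) _).symm
      calc ENNReal.ofReal |(∫ u, φ u * g u x ∂μ) / D x - (∫ u, η u * g u x ∂μ) / D x|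
          ≤ ENNReal.ofReal (∫ u, F u * g u x / D x ∂μ) := by
            rw [← h2]; exact ENNReal.ofReal_le_ofReal h1
        _ = ∫⁻ u, ENNReal.ofReal (F u * g u x / D x) ∂μ := by
            refine ofReal_integral_eq_lintegral_ofReal (hFg.div_const _) ?_
            exact Filter.Eventually.of_forall fun u =>
              div_nonneg (mul_nonneg (hF0 u) (hg0 u x)) (hD0 x)
        _ = ∫⁻ u, ENNReal.ofReal (F u) * ENNReal.ofReal (g u x / D x) ∂μ := by
            refine lintegral_congr fun u => ?_
            rw [mul_div_assoc, ENNReal.ofReal_mul (hF0 u)]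
  -- measurability of the integrand
  have hNm : ∀ (ψ : EuclideanSpace ℝ (Fin d) → ℝ), Measurable ψ →
      Measurable (fun x => ∫ u, ψ u * g u x ∂μ) := by
    intro ψ hψm
    have : Measurable (Function.uncurry fun u x => ψ u * g u x) :=
      (hψm.comp measurable_fst).mul hgm
    exact this.stronglyMeasurable.integral_prod_left.measurable
  have hAm : AEStronglyMeasurable
      (fun x => |(∫ u, φ u * g u x ∂μ) / D x - (∫ u, η u * g u x ∂μ) / D x|) μ :=
    ((((hNm φ hφm).div hDm).sub ((hNm η hηm).div hDm)).abs).aestronglyMeasurable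
  have hmain : ∫ x, |(∫ u, φ u * g u x ∂μ) / D x - (∫ u, η u * g u x ∂μ) / D x| ∂μ
      = ENNReal.toReal (∫⁻ x,
        ENNReal.ofReal |(∫ u, φ u * g u x ∂μ) / D x - (∫ u, η u * g u x ∂μ) / D x| ∂μ) :=
    integral_eq_lintegral_of_nonneg_ae (Filter.Eventually.of_forall fun x => abs_nonneg _) hAm
  have hswap_meas : Measurable (fun p : EuclideanSpace ℝ (Fin d) × EuclideanSpace ℝ (Fin d) =>
      ENNReal.ofReal (F p.2) * ENNReal.ofReal (g p.2 p.1 / D p.1)) := by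
    refine (ENNReal.measurable_ofReal.comp (hFm.comp measurable_snd)).mul
      (ENNReal.measurable_ofReal.comp ?_)
    exact (hgm.comp measurable_swap).div (hDm.comp measurable_fst)
  have chain : (∫⁻ x,
        ENNReal.ofReal |(∫ u, φ u * g u x ∂μ) / D x - (∫ u, η u * g u x ∂μ) / D x| ∂μ)
      ≤ ENNReal.ofReal R * ENNReal.ofReal ε' := by
    calc (∫⁻ x, ENNReal.ofReal |(∫ u, φ u * g u x ∂μ) / D x - (∫ u, η u * g u x ∂μ) / D x| ∂μ)
        ≤ ∫⁻ x, ∫⁻ u, ENNReal.ofReal (F u) * ENNReal.ofReal (g u x / D x) ∂μ ∂μ :=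
          lintegral_mono key
      _ = ∫⁻ u, ∫⁻ x, ENNReal.ofReal (F u) * ENNReal.ofReal (g u x / D x) ∂μ ∂μ :=
          lintegral_lintegral_swap hswap_meas.aemeasurable
      _ = ∫⁻ u, ENNReal.ofReal (F u) * ∫⁻ x, ENNReal.ofReal (g u x / D x) ∂μ ∂μ := by
          exact lintegral_congr fun u => lintegral_const_mul' _ _ ENNReal.ofReal_ne_top
      _ ≤ ∫⁻ u, ENNReal.ofReal (F u) * ENNReal.ofReal R ∂μ := by
          refine lintegral_mono fun u => mul_le_mul_right ?_ _
          rw [← ofReal_integral_eq_lintegral_ofReal (hgratio u)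
            (Filter.Eventually.of_forall fun x => div_nonneg (hg0 u x) (hD0 x))]
          exact ENNReal.ofReal_le_ofReal (hR u)
      _ = ENNReal.ofReal R * ∫⁻ u, ENNReal.ofReal (F u) ∂μ := by
          rw [lintegral_mul_const' _ _ ENNReal.ofReal_ne_top, mul_comm]
      _ = ENNReal.ofReal R * ENNReal.ofReal (∫ u, F u ∂μ) := by
          rw [← ofReal_integral_eq_lintegral_ofReal hFint (Filter.Eventually.of_forall hF0)]
      _ ≤ ENNReal.ofReal R * ENNReal.ofReal ε' :=
          mul_le_mul_right (ENNReal.ofReal_le_ofReal hεf.le) _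
  calc ∫ x, |(∫ u, φ u * g u x ∂μ) / D x - (∫ u, η u * g u x ∂μ) / D x| ∂μ
      ≤ (ENNReal.ofReal R * ENNReal.ofReal ε').toReal := by
        rw [hmain]
        exact ENNReal.toReal_mono (by finiteness) chain
    _ = R * ε' := by
        rw [← ENNReal.ofReal_mul hR0, ENNReal.toReal_ofReal (mul_nonneg hR0 hε0)]
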